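/- Let K be a complete non-archimedean valued field and c₀ the space of K-valued null sequences. The linear operator T : c₀ → c₀ defined by T(x) = (Σ_{i=1}^∞ x_i) e₁ is continuous but does not admit an adjoint with respect to the bilinear form ⟨x,y⟩ = Σ x_i y_i; that is, there is no continuous linear S : c₀ → c₀ with ⟨T x, y⟩ = ⟨x, S y⟩ for all x, y ∈ c₀. -/

import Mathlib

open Filter Topology

noncomputable section

/-- `c₀(ℕ, K)`: the space of `K`-valued null sequences (zero-at-infinity functions on
discrete `ℕ`), with the supremum norm. -/
abbrev Cz (K : Type) [NontriviallyNormedField K] := ZeroAtInftyContinuousMap ℕ K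

/-- The canonical bilinear form `⟨x, y⟩ = ∑ᵢ xᵢ yᵢ` on `c₀`. -/
def pr {K : Type} [NontriviallyNormedField K] (x y : Cz K) : K := ∑' i, x i * y i

/-- The canonical basis vector `eᵢ` of `c₀`. -/
def e (K : Type) [NontriviallyNormedField K] (i : ℕ) : Cz K where
  toFun := fun j => if j = i then (1 : K) else 0
  continuous_toFun := continuous_of_discreteTopology
  zero_at_infty' := by
    rw [cocompact_eq_atTop (α := ℕ)]
    apply tendsto_nhds_of_eventually_eq
    filter_upwards [eventually_gt_atTop i] with j hj
    simp [hj.ne']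

/-- A continuous linear operator on `c₀` is compact iff it is a uniform limit of
finite-rank continuous operators (equivalently, it maps the unit ball to a compactoid). -/
def IsCompactOp {K : Type} [NontriviallyNormedField K] (T : Cz K →L[K] Cz K) : Prop :=
  ∀ ε : ℝ, 0 < ε → ∃ S : Cz K →L[K] Cz K,
    Module.Finite K (LinearMap.range (S : Cz K →ₗ[K] Cz K)) ∧ ‖T - S‖ ≤ ε

/-- The closed unit ball of a non-archimedean valued field, as a subring
(the valuation ring). -/
def valRing {K : Type} [NontriviallyNormedField K]
    (hna : IsNonarchimedean (norm : K → ℝ)) : Subring K where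
  carrier := {x : K | ‖x‖ ≤ 1}
  mul_mem' := fun {a b} ha hb => by
    simp only [Set.mem_setOf_eq] at *
    rw [norm_mul]
    nlinarith [norm_nonneg a, norm_nonneg b]
  one_mem' := by simp
  add_mem' := fun {a b} ha hb => by
    simp only [Set.mem_setOf_eq] at *
    exact (hna a b).trans (max_le ha hb)
  zero_mem' := by simp
  neg_mem' := fun {a} ha => by simpa using ha

/-- The maximal ideal (open unit ball) of the valuation ring. -/
def valIdeal {K : Type} [NontriviallyNormedField K]
    (hna : IsNonarchimedean (norm : K → ℝ)) : Ideal (valRing hna) where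
  carrier := {x | ‖(x : K)‖ < 1}
  add_mem' := fun {a b} ha hb => by
    simp only [Set.mem_setOf_eq] at *
    push_cast
    exact ((hna a b)).trans_lt (max_lt ha hb)
  zero_mem' := by simp
  smul_mem' := fun c x hx => by
    simp only [Set.mem_setOf_eq, smul_eq_mul] at *
    push_cast
    rw [norm_mul]
    calc ‖(c : K)‖ * ‖(x : K)‖ ≤ 1 * ‖(x : K)‖ := by
          exact mul_le_mul_of_nonneg_right c.2 (norm_nonneg _)
      _ = ‖(x : K)‖ := one_mul _
      _ < 1 := hx

/-- The residue class field of a non-archimedean valued field. -/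
abbrev Residue {K : Type} [NontriviallyNormedField K]
    (hna : IsNonarchimedean (norm : K → ℝ)) : Type :=
  valRing hna ⧸ valIdeal hna

/-- A commutative ring is formally real if `-1` is not a sum of squares. -/
def FormallyRealRing (R : Type) [CommRing R] : Prop :=
  ¬ ∃ (n : ℕ) (a : Fin n → R), (∑ i, a i ^ 2) = -1

lemma e_apply {K : Type} [NontriviallyNormedField K] (i j : ℕ) :
    e K i j = if j = i then (1 : K) else 0 := rfl

section main
variable {K : Type} [NontriviallyNormedField K] [CompleteSpace K]

lemma summable_cz (hna : IsNonarchimedean (norm : K → ℝ)) (x : Cz K) : Summable (⇑x) := by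
  haveI := IsUltrametricDist.isUltrametricDist_of_isNonarchimedean_norm hna
  apply NonarchimedeanAddGroup.summable_of_tendsto_cofinite_zero
  have := zero_at_infty (F := Cz K) x
  rwa [cocompact_eq_atTop (α := ℕ), ← Nat.cofinite_eq_atTop] at this

omit [CompleteSpace K] in
lemma norm_apply_le (x : Cz K) (i : ℕ) : ‖x i‖ ≤ ‖x‖ := by
  calc ‖x i‖ ≤ ‖x.toBCF‖ := BoundedContinuousFunction.norm_coe_le_norm x.toBCF i
    _ = ‖x‖ := ZeroAtInftyContinuousMap.norm_toBCF_eq_norm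

omit [CompleteSpace K] in
lemma pr_e_left (x : Cz K) (n : ℕ) : pr (e K n) x = x n := by
  unfold pr
  rw [tsum_eq_single (f := fun i => (e K n) i * x i) n
    (fun i hi => by show (e K n) i * x i = 0; rw [e_apply, if_neg hi, zero_mul])]
  rw [e_apply, if_pos rfl, one_mul]

omit [CompleteSpace K] in
lemma tsum_e (n : ℕ) : (∑' i, (e K n) i) = 1 := by
  rw [tsum_eq_single (f := fun i => (e K n) i) n
    (fun i hi => by show (e K n) i = 0; rw [e_apply, if_neg hi])]
  rw [e_apply, if_pos rfl]

theorem stmt2 {K : Type} [NontriviallyNormedField K] [CompleteSpace K]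
    (hna : IsNonarchimedean (norm : K → ℝ)) :
    (∃ T : Cz K →L[K] Cz K, ∀ x : Cz K, T x = (∑' i, x i) • e K 0) ∧
    (∀ T : Cz K →L[K] Cz K, (∀ x : Cz K, T x = (∑' i, x i) • e K 0) →
      ¬ ∃ S : Cz K →L[K] Cz K, ∀ x z : Cz K, pr (T x) z = pr x (S z)) := by
  haveI := IsUltrametricDist.isUltrametricDist_of_isNonarchimedean_norm hna
  constructor
  · -- existence
    set L : Cz K →ₗ[K] Cz K :=
      { toFun := fun x => (∑' i, x i) • e K 0
        map_add' := fun x y => by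
          ext j
          simp only [ZeroAtInftyContinuousMap.coe_add, Pi.add_apply,
            ZeroAtInftyContinuousMap.coe_smul, Pi.smul_apply, smul_eq_mul]
          rw [Summable.tsum_add (summable_cz hna x) (summable_cz hna y)]; ring
        map_smul' := fun c x => by
          ext j
          simp only [RingHom.id_apply, ZeroAtInftyContinuousMap.coe_smul, Pi.smul_apply,
            smul_eq_mul]
          rw [tsum_mul_left]; ring }
    refine ⟨L.mkContinuous (1 * ‖e K 0‖) (fun x => ?_), fun x => rfl⟩
    show ‖(∑' i, x i) • e K 0‖ ≤ 1 * ‖e K 0‖ * ‖x‖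
    refine le_trans (le_of_eq (norm_smul (∑' i, x i) (e K 0))) ?_
    have h1 : ‖∑' i, x i‖ ≤ ‖x‖ :=
      (IsUltrametricDist.norm_tsum_le _).trans (ciSup_le fun i => norm_apply_le x i)
    calc ‖∑' i, x i‖ * ‖e K 0‖ ≤ ‖x‖ * ‖e K 0‖ :=
          mul_le_mul_of_nonneg_right h1 (norm_nonneg _)
      _ = 1 * ‖e K 0‖ * ‖x‖ := by ring
  · rintro T hT ⟨S, hS⟩
    have key : ∀ n : ℕ, (S (e K 0)) n = 1 := by
      intro n
      have h := hS (e K n) (e K 0)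
      rw [hT, tsum_e, one_smul, pr_e_left, pr_e_left] at h
      rw [← h, e_apply, if_pos rfl]
    have h0 := zero_at_infty (F := Cz K) (S (e K 0))
    rw [cocompact_eq_atTop (α := ℕ)] at h0
    obtain ⟨n, hn⟩ := (h0.eventually (Metric.ball_mem_nhds (0 : K) one_pos)).exists
    rw [key n] at hn
    simp [Metric.mem_ball] at hn

end main
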